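/- The coefficients of the exponential-polynomial representation of the Legendre Fourier transforms satisfy the symmetry A_m^j = (−1)^{1+j−m} B_m^j for all j ∈ ℕ₀ and 0 ≤ m ≤ j. -/
import Mathlib


/-- The recurrence satisfied by both coefficient families `A_m^j` and `B_m^j`
(indexing: `X j m` means `X_m^j`). -/
def CoeffRec (X : ℕ → ℕ → ℝ) : Prop :=
  ∀ j : ℕ, 1 ≤ j →
    (X (j+1) 0 = Real.sqrt ((2*(j:ℝ)+3)/(2*(j:ℝ)-1)) * X (j-1) 0) ∧
    (∀ m : ℕ, 1 ≤ m → m ≤ j - 1 →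
      X (j+1) m = Real.sqrt ((2*(j:ℝ)+3)/(2*(j:ℝ)-1)) * X (j-1) m
        - 2 * Real.sqrt ((2*(j:ℝ)+1)*(2*(j:ℝ)+3)) * X j (m-1)) ∧
    (X (j+1) j = -(2 * Real.sqrt ((2*(j:ℝ)+1)*(2*(j:ℝ)+3))) * X j (j-1)) ∧
    (X (j+1) (j+1) = -(2 * Real.sqrt ((2*(j:ℝ)+1)*(2*(j:ℝ)+3))) * X j j)

theorem AB_symmetry (A B : ℕ → ℕ → ℝ)
    (hA0 : A 0 0 = -1) (hB0 : B 0 0 = 1)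
    (hA10 : A 1 0 = Real.sqrt 3) (hA11 : A 1 1 = 2 * Real.sqrt 3)
    (hB10 : B 1 0 = Real.sqrt 3) (hB11 : B 1 1 = -(2 * Real.sqrt 3))
    (hArec : CoeffRec A) (hBrec : CoeffRec B) :
    ∀ j : ℕ, ∀ m : ℕ, m ≤ j → A j m = (-1:ℝ)^(1 + j - m) * B j m := by
  intro j
  induction j using Nat.strong_induction_on with
  | _ j ih =>
    match j with
    | 0 =>
      intro m hm
      interval_cases m
      simp [hA0, hB0]
    | 1 =>
      intro m hm
      interval_cases m
      · simp [hA10, hB10]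
      · simp [hA11, hB11]
    | (j+2) =>
      intro m hm
      obtain ⟨h0, hmid, hj, hj1⟩ := hArec (j+1) (by omega)
      obtain ⟨h0', hmid', hj', hj1'⟩ := hBrec (j+1) (by omega)
      simp only [Nat.add_sub_cancel] at h0 hmid hj hj1 h0' hmid' hj' hj1'
      rcases Nat.lt_or_ge m 1 with hm0 | hm1
      · -- m = 0
        interval_cases m
        rw [h0, h0', ih j (by omega) 0 (by omega)]
        have e : 1 + j - 0 + 2 = 1 + (j+2) - 0 := by omega
        rw [← e, pow_add]
        ring
      · rcases Nat.lt_or_ge m (j+1) with hmj | hmj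
        · -- 1 ≤ m ≤ j
          rw [hmid m hm1 (by omega), hmid' m hm1 (by omega),
            ih j (by omega) m (by omega), ih (j+1) (by omega) (m-1) (by omega)]
          have e1 : 1 + (j+2) - m = (1 + j - m) + 2 := by omega
          have e2 : 1 + (j+1) - (m-1) = (1 + j - m) + 2 := by omega
          rw [e1, e2, pow_add]
          ring
        · rcases Nat.lt_or_ge m (j+2) with hmj2 | hmj2
          · -- m = j+1
            have hm' : m = j + 1 := by omega
            subst hm'
            rw [hj, hj', ih (j+1) (by omega) j (by omega)]
            have e1 : 1 + (j+2) - (j+1) = 2 := by omega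
            have e2 : 1 + (j+1) - j = 2 := by omega
            rw [e1, e2]
            ring
          · -- m = j+2
            have hm' : m = j + 2 := by omega
            subst hm'
            rw [hj1, hj1', ih (j+1) (by omega) (j+1) (by omega)]
            have e1 : 1 + (j+2) - (j+2) = 1 := by omega
            have e2 : 1 + (j+1) - (j+1) = 1 := by omega
            rw [e1, e2]
            ring
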